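/- arXiv:1303.4335 — 4 statements merged into one kernel-verified Lean document; each statement's English description precedes it below -/
import Mathlib

section
/- Let 𝒪 be a discrete valuation ring whose maximal ideal is generated by a prime number p, let 𝔽 := 𝒪/p𝒪 be its residue field, let m ≥ 1, and let M', M, M'' be finitely generated 𝒪-modules killed by p^m. If there is an exact sequence of 𝒪-modules 0 → M' → M → M'' (exact at M' and at M), then r_{𝔭,m}(M) ≤ r_{𝔭,m}(M') + dim_𝔽(M'' ⊗_𝒪 𝔽), where r_{𝔭,m}(M) := dim_𝔽(p^{m−1}M). -/
open TensorProduct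

/-- `rDim O p m M` is `r_{𝔭,m}(M) := dim_𝔽 (p^{m-1}·M)`, where `𝔽 = 𝒪/p𝒪`;
for `M` killed by `p^m`, the submodule `p^{m-1}·M` is killed by `p`, so its
`𝔽`-vector space structure is canonically realized by base change `𝔽 ⊗[𝒪] (p^{m-1}·M)`. -/
noncomputable def rDim (O : Type*) [CommRing O] (p m : ℕ)
    (M : Type*) [AddCommGroup M] [Module O M] : ℕ :=
  Module.finrank (O ⧸ Ideal.span {(p : O)})
    ((O ⧸ Ideal.span {(p : O)}) ⊗[O]
      ↥(Ideal.span {(p : O) ^ (m - 1)} • (⊤ : Submodule O M)))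

/-- Transporting residual dimensions along an identification of an ideal with the
maximal ideal of a local ring. -/
private lemma finrank_quot_eq {O : Type*} [CommRing O] [IsLocalRing O] {I : Ideal O}
    (hI : I = IsLocalRing.maximalIdeal O)
    (X : Type*) [AddCommGroup X] [Module O X] :
    Module.finrank (O ⧸ I) ((O ⧸ I) ⊗[O] X) =
      Module.finrank (IsLocalRing.ResidueField O) ((IsLocalRing.ResidueField O) ⊗[O] X) := by
  subst hI
  rfl

/-- Linear algebra: if `φ : V → W` is surjective and `U ≤ V`, then
`dim W ≤ dim (φ U) + dim (V ⧸ U)`. -/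
private lemma finrank_aux {K V W : Type*} [Field K] [AddCommGroup V] [Module K V]
    [AddCommGroup W] [Module K W] [FiniteDimensional K V] [FiniteDimensional K W]
    (φ : V →ₗ[K] W) (hφ : Function.Surjective φ) (U : Submodule K V) :
    Module.finrank K W ≤ Module.finrank K (U.map φ) + Module.finrank K (V ⧸ U) := by
  have h1 := Submodule.finrank_quotient_add_finrank (U.map φ)
  let ψ : (V ⧸ U) →ₗ[K] (W ⧸ (U.map φ)) := Submodule.mapQ U (U.map φ) φ
      (fun x hx => Submodule.mem_comap.mpr (Submodule.mem_map_of_mem hx))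
  have hψ : Function.Surjective ψ := by
    intro w
    obtain ⟨w, rfl⟩ := Submodule.mkQ_surjective _ w
    obtain ⟨v, rfl⟩ := hφ w
    exact ⟨Submodule.Quotient.mk v, Submodule.mapQ_apply _ _ _ _⟩
  have h2 := LinearMap.finrank_range_le (R := K) (M := V ⧸ U) (M' := W ⧸ (U.map φ)) ψ
  rw [LinearMap.range_eq_top.mpr hψ, finrank_top] at h2
  omega

/-- If there is an `O`-linear surjection `O^r → Y`, then `dim_k (k ⊗ Y) ≤ r`. -/
private lemma aux_surj_bound {O : Type*} [CommRing O] [IsDomain O] [IsPrincipalIdealRing O]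
    [IsLocalRing O] {Y : Type*} [AddCommGroup Y] [Module O Y]
    (r : ℕ) (σ : (Fin r →₀ O) →ₗ[O] Y) (hσ : Function.Surjective σ) :
    Module.finrank (IsLocalRing.ResidueField O) ((IsLocalRing.ResidueField O) ⊗[O] Y) ≤ r := by
  have hσK : Function.Surjective ⇑(σ.baseChange (IsLocalRing.ResidueField O)) := by
    rw [LinearMap.baseChange_eq_ltensor]
    exact LinearMap.lTensor_surjective _ hσ
  have h2 := LinearMap.finrank_range_le (R := (IsLocalRing.ResidueField O)) (M := (IsLocalRing.ResidueField O) ⊗[O] (Fin r →₀ O))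
    (M' := (IsLocalRing.ResidueField O) ⊗[O] Y) (σ.baseChange (IsLocalRing.ResidueField O))
  rw [LinearMap.range_eq_top.mpr hσK, finrank_top] at h2
  have h3 : Module.finrank (IsLocalRing.ResidueField O) ((IsLocalRing.ResidueField O) ⊗[O] (Fin r →₀ O)) = r := by
    rw [Module.finrank_tensorProduct, Module.finrank_self,
      Module.finrank_finsupp_self, one_mul, Fintype.card_fin]
  omega

private lemma aux_inj_bound {O : Type*} [CommRing O] [IsDomain O]
    {ι : Type*} [Fintype ι] (r : ℕ)
    (ff : (Fin r →₀ O) →ₗ[O] (ι →₀ O)) (hff : Function.Injective ff) :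
    r ≤ Fintype.card ι := by
  have h := LinearMap.finrank_le_finrank_of_injective hff
  simpa [Module.finrank_finsupp_self] using h

/-- Over a local PID, the residual dimension of a submodule is at most that of the
ambient finitely generated module. -/
private lemma finrank_submodule_le {O : Type*} [CommRing O] [IsDomain O]
    [IsPrincipalIdealRing O] [IsLocalRing O]
    {M'' : Type*} [AddCommGroup M''] [Module O M''] [Module.Finite O M'']
    (N : Submodule O M'') :
    Module.finrank (IsLocalRing.ResidueField O) ((IsLocalRing.ResidueField O) ⊗[O] ↥N) ≤
      Module.finrank (IsLocalRing.ResidueField O) ((IsLocalRing.ResidueField O) ⊗[O] M'') := by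
  haveI : IsNoetherian O M'' := isNoetherian_of_isNoetherianRing_of_finite O M''
  have halg : Function.Surjective (algebraMap O (IsLocalRing.ResidueField O)) := by
    rw [IsLocalRing.ResidueField.algebraMap_eq]
    exact IsLocalRing.residue_surjective
  choose lift hlift using TensorProduct.mk_surjective O M'' (IsLocalRing.ResidueField O) halg
  set b : Module.Basis (Module.Free.ChooseBasisIndex (IsLocalRing.ResidueField O) ((IsLocalRing.ResidueField O) ⊗[O] M'')) (IsLocalRing.ResidueField O) ((IsLocalRing.ResidueField O) ⊗[O] M'') := Module.Free.chooseBasis _ _ with hb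
  have hspan : Submodule.span O (Set.range fun i => lift (b i)) = ⊤ :=
    IsLocalRing.span_eq_top_of_tmul_eq_basis (fun i => lift (b i)) b (fun i => hlift (b i))
  set π : ((Module.Free.ChooseBasisIndex (IsLocalRing.ResidueField O) ((IsLocalRing.ResidueField O) ⊗[O] M'')) →₀ O) →ₗ[O] M'' := Finsupp.linearCombination O (fun i => lift (b i)) with hπdef
  have hπ : Function.Surjective π := by
    rw [← LinearMap.range_eq_top, hπdef, Finsupp.range_linearCombination]
    exact hspan
  obtain ⟨r, bN⟩ :=
    Submodule.basisOfPid (Finsupp.basisSingleOne : Module.Basis (Module.Free.ChooseBasisIndex (IsLocalRing.ResidueField O) ((IsLocalRing.ResidueField O) ⊗[O] M'')) O ((Module.Free.ChooseBasisIndex (IsLocalRing.ResidueField O) ((IsLocalRing.ResidueField O) ⊗[O] M'')) →₀ O)) (N.comap π)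
  have hr : r ≤ Fintype.card (Module.Free.ChooseBasisIndex (IsLocalRing.ResidueField O) ((IsLocalRing.ResidueField O) ⊗[O] M'')) := by
    refine aux_inj_bound r ((N.comap π).subtype ∘ₗ bN.repr.symm.toLinearMap) ?_
    exact (N.comap π).injective_subtype.comp bN.repr.symm.injective
  let ρ : ↥(N.comap π) →ₗ[O] ↥N := (π.domRestrict (N.comap π)).codRestrict N (fun x => x.2)
  have hρ : Function.Surjective ρ := by
    rintro ⟨n, hn⟩
    obtain ⟨x, hx⟩ := hπ n
    refine ⟨⟨x, ?_⟩, ?_⟩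
    · simp only [Submodule.mem_comap, hx]; exact hn
    · exact Subtype.ext hx
  have hσ : Function.Surjective ⇑(ρ ∘ₗ bN.repr.symm.toLinearMap) := by
    exact hρ.comp bN.repr.symm.surjective
  have e1 : Module.finrank (IsLocalRing.ResidueField O) ((IsLocalRing.ResidueField O) ⊗[O] ↥N) ≤ r :=
    aux_surj_bound r _ hσ
  have e3 : Module.finrank (IsLocalRing.ResidueField O) ((IsLocalRing.ResidueField O) ⊗[O] M'') = Fintype.card (Module.Free.ChooseBasisIndex (IsLocalRing.ResidueField O) ((IsLocalRing.ResidueField O) ⊗[O] M'')) :=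
    Module.finrank_eq_card_chooseBasisIndex _ _
  omega

/-- `dim (φ(range ι)) ≤ dim W₀` whenever `φ ∘ ι` factors through `W₀`. -/
private lemma aux_map_le {K V₀ V W₀ W : Type*} [Field K]
    [AddCommGroup V₀] [Module K V₀] [AddCommGroup V] [Module K V]
    [AddCommGroup W₀] [Module K W₀] [AddCommGroup W] [Module K W]
    [FiniteDimensional K W₀] [FiniteDimensional K W]
    (φ : V →ₗ[K] W) (ι : V₀ →ₗ[K] V) (ψ : V₀ →ₗ[K] W₀) (j : W₀ →ₗ[K] W)
    (hcomm : φ ∘ₗ ι = j ∘ₗ ψ) :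
    Module.finrank K ((LinearMap.range ι).map φ) ≤ Module.finrank K W₀ := by
  have h1 : (LinearMap.range ι).map φ ≤ LinearMap.range j := by
    rw [← LinearMap.range_comp, hcomm, LinearMap.range_comp]
    exact LinearMap.map_le_range
  have h2 := Submodule.finrank_mono h1
  have h3 := LinearMap.finrank_range_le (R := K) (M := W₀) (M' := W) j
  omega

/-- `dim (V ⧸ range ι) ≤ dim W` given exactness. -/
private lemma aux_coker_le {K V₀ V W : Type*} [Field K]
    [AddCommGroup V₀] [Module K V₀] [AddCommGroup V] [Module K V] [AddCommGroup W] [Module K W]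
    [FiniteDimensional K V] [FiniteDimensional K W]
    (ι : V₀ →ₗ[K] V) (G : V →ₗ[K] W) (hker : LinearMap.ker G = LinearMap.range ι) :
    Module.finrank K (V ⧸ LinearMap.range ι) ≤ Module.finrank K W := by
  rw [← hker]
  have h1 : Module.finrank K (V ⧸ LinearMap.ker G) =
      Module.finrank K ↥(LinearMap.range G) := (LinearMap.quotKerEquivRange G).finrank_eq
  have h2 : Module.finrank K ↥(LinearMap.range G) ≤ Module.finrank K W :=
    Submodule.finrank_le (LinearMap.range G)
  omega

/-- Given an exact sequence `0 → M' → M → M''` of finitely generated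
`𝒪`-modules killed by `p^m` (exact at `M'` and at `M`), one has
`r_{𝔭,m}(M) ≤ r_{𝔭,m}(M') + dim_𝔽 (M'' ⊗_𝒪 𝔽)`. -/
theorem stmt3 (O : Type*) [CommRing O] [IsDomain O] [IsDiscreteValuationRing O]
    (p : ℕ) (hp : p.Prime)
    (hmax : IsLocalRing.maximalIdeal O = Ideal.span {(p : O)})
    (m : ℕ) (hm : 1 ≤ m)
    (M' : Type*) [AddCommGroup M'] [Module O M'] [Module.Finite O M']
    (M : Type*) [AddCommGroup M] [Module O M] [Module.Finite O M]
    (M'' : Type*) [AddCommGroup M''] [Module O M''] [Module.Finite O M'']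
    (hM' : ∀ x : M', ((p : O) ^ m) • x = 0)
    (hM : ∀ x : M, ((p : O) ^ m) • x = 0)
    (hM'' : ∀ x : M'', ((p : O) ^ m) • x = 0)
    (f : M' →ₗ[O] M) (g : M →ₗ[O] M'')
    (hf : Function.Injective f)
    (hfg : LinearMap.range f = LinearMap.ker g) :
    rDim O p m M ≤ rDim O p m M' +
      Module.finrank (O ⧸ Ideal.span {(p : O)})
        ((O ⧸ Ideal.span {(p : O)}) ⊗[O] M'') := by
  classical
  unfold rDim
  rw [finrank_quot_eq hmax.symm, finrank_quot_eq hmax.symm, finrank_quot_eq hmax.symm]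
  set c : O := (p : O) ^ (m - 1) with hc
  set P : Submodule O M := Ideal.span {c} • ⊤ with hP
  set P' : Submodule O M' := Ideal.span {c} • ⊤ with hP'
  haveI : IsNoetherian O M := isNoetherian_of_isNoetherianRing_of_finite O M
  haveI : IsNoetherian O M' := isNoetherian_of_isNoetherianRing_of_finite O M'
  haveI : IsNoetherian O M'' := isNoetherian_of_isNoetherianRing_of_finite O M''
  haveI : Module.Finite O ↥P := Module.Finite.iff_fg.mpr (IsNoetherian.noetherian P)
  haveI : Module.Finite O ↥P' := Module.Finite.iff_fg.mpr (IsNoetherian.noetherian P')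
  haveI : Module.Finite O ↥(LinearMap.range g) :=
    Module.Finite.iff_fg.mpr (IsNoetherian.noetherian (LinearMap.range g))
  -- the multiplication-by-`c` maps onto `P`, `P'`
  have hmemP : ∀ x : M, c • x ∈ P :=
    fun x => Submodule.smul_mem_smul (Ideal.mem_span_singleton_self c) trivial
  have hmemP' : ∀ x : M', c • x ∈ P' :=
    fun x => Submodule.smul_mem_smul (Ideal.mem_span_singleton_self c) trivial
  set q : M →ₗ[O] ↥P := (LinearMap.lsmul O M c).codRestrict P hmemP with hqdef
  set q' : M' →ₗ[O] ↥P' := (LinearMap.lsmul O M' c).codRestrict P' hmemP' with hq'def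
  have hsurj : ∀ z ∈ P, ∃ x : M, c • x = z := by
    intro z hz
    refine Submodule.smul_induction_on hz ?_ ?_
    · rintro s hs n -
      obtain ⟨a, rfl⟩ := Ideal.mem_span_singleton'.mp hs
      exact ⟨a • n, by rw [smul_smul, mul_comm, mul_smul]⟩
    · rintro x y ⟨u, rfl⟩ ⟨v, rfl⟩
      exact ⟨u + v, smul_add c u v⟩
  have hq : Function.Surjective q := by
    rintro ⟨z, hz⟩
    obtain ⟨x, hx⟩ := hsurj z hz
    exact ⟨x, Subtype.ext hx⟩
  have hφ : Function.Surjective ⇑(q.baseChange (IsLocalRing.ResidueField O)) := by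
    rw [LinearMap.baseChange_eq_ltensor]
    exact LinearMap.lTensor_surjective (IsLocalRing.ResidueField O) hq
  -- step 1
  have step1 := finrank_aux (q.baseChange (IsLocalRing.ResidueField O)) hφ (LinearMap.range (f.baseChange (IsLocalRing.ResidueField O)))
  -- step 2
  have hfP : ∀ x ∈ P', f x ∈ P := by
    intro x hx
    have hle : P'.map f ≤ P := by
      rw [hP', Submodule.map_smul'']
      exact Submodule.smul_mono le_rfl le_top
    exact hle (Submodule.mem_map_of_mem hx)
  set ft : ↥P' →ₗ[O] ↥P := f.restrict hfP with hftdef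
  have hcomm : q ∘ₗ f = ft ∘ₗ q' := by
    ext x
    simp [hqdef, hq'def, hftdef, LinearMap.restrict_apply, map_smul]
    exact (map_smul f c x).symm
  have hcommT : (q.baseChange (IsLocalRing.ResidueField O)) ∘ₗ (f.baseChange (IsLocalRing.ResidueField O)) =
      (ft.baseChange (IsLocalRing.ResidueField O)) ∘ₗ (q'.baseChange (IsLocalRing.ResidueField O)) := by
    rw [← LinearMap.baseChange_comp, ← LinearMap.baseChange_comp, hcomm]
  have step2 := aux_map_le (q.baseChange (IsLocalRing.ResidueField O)) (f.baseChange (IsLocalRing.ResidueField O)) (q'.baseChange (IsLocalRing.ResidueField O))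
    (ft.baseChange (IsLocalRing.ResidueField O)) hcommT
  -- step 3
  have hexact : Function.Exact ⇑f ⇑(g.rangeRestrict) :=
    LinearMap.exact_iff.mpr (by rw [LinearMap.ker_rangeRestrict]; exact hfg.symm)
  have hexactT : Function.Exact ⇑(f.baseChange (IsLocalRing.ResidueField O)) ⇑(g.rangeRestrict.baseChange (IsLocalRing.ResidueField O)) := by
    rw [LinearMap.baseChange_eq_ltensor, LinearMap.baseChange_eq_ltensor]
    exact lTensor_exact (IsLocalRing.ResidueField O) hexact g.surjective_rangeRestrict
  have hker : LinearMap.ker (g.rangeRestrict.baseChange (IsLocalRing.ResidueField O)) =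
      LinearMap.range (f.baseChange (IsLocalRing.ResidueField O)) := hexactT.linearMap_ker_eq
  have step3 := aux_coker_le (f.baseChange (IsLocalRing.ResidueField O)) (g.rangeRestrict.baseChange (IsLocalRing.ResidueField O)) hker
  have step4 := finrank_submodule_le (O := O) (LinearMap.range g)
  exact le_trans step1 (add_le_add (le_trans step2 le_rfl) (le_trans step3 step4))
end

section
/- Let p and ℓ be prime numbers and let m ≥ 1 be an integer with p^m dividing ℓ+1. Let G be a cyclic group of order ℓ+1 with a fixed generator σ, and for 0 ≤ k ≤ ℓ let D^k := Σ_{i=k}^{ℓ} C(i,k)·σ^i ∈ ℤ[G]. Then for every integer k with 0 < k < p (note that k ≤ ℓ automatically, since ℓ+1 ≥ p^m ≥ p) one has (σ − 1)·D^k ≡ −σ·D^{k−1} (mod p^m), i.e. (σ − 1)·D^k + σ·D^{k−1} ∈ p^m·ℤ[G]. -/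
/-- The Darmon–Kolyvagin derivative `D^k := Σ_{i=k}^{ℓ} C(i,k)·σ^i ∈ ℤ[G]`. -/
noncomputable def DK {G : Type*} [Group G] (σ : G) (ℓ k : ℕ) : MonoidAlgebra ℤ G :=
  ∑ i ∈ Finset.Icc k ℓ, MonoidAlgebra.single (σ ^ i) (i.choose k : ℤ)

/-- Let `p, ℓ` be primes, `m ≥ 1` with `p^m ∣ ℓ+1`, and let `G` be cyclic
of order `ℓ+1` with generator `σ`. For `0 < k < p` one has
`(σ − 1)·D^k ≡ −σ·D^{k−1} (mod p^m)`, i.e. `(σ − 1)·D^k + σ·D^{k−1} ∈ p^m·ℤ[G]`. -/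
theorem stmt5 {G : Type*} [Group G] [Fintype G] (p ℓ m : ℕ)
    (hp : p.Prime) (hℓ : ℓ.Prime) (hm : 1 ≤ m) (hdvd : p ^ m ∣ ℓ + 1)
    (σ : G) (hcard : Fintype.card G = ℓ + 1)
    (hgen : ∀ g : G, g ∈ Subgroup.zpowers σ)
    (k : ℕ) (hk0 : 0 < k) (hkp : k < p) :
    ∃ c : MonoidAlgebra ℤ G,
      (MonoidAlgebra.single σ (1 : ℤ) - 1) * DK σ ℓ k
          + MonoidAlgebra.single σ (1 : ℤ) * DK σ ℓ (k - 1)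
        = ((p : ℤ) ^ m) • c := by
  have hσ : σ ^ (ℓ + 1) = 1 := by rw [← hcard]; exact pow_card_eq_one
  have hple : p ≤ ℓ + 1 :=
    le_trans (Nat.le_self_pow (by omega) p) (Nat.le_of_dvd (Nat.succ_pos ℓ) hdvd)
  have hkl : k ≤ ℓ := by omega
  have hk1 : k - 1 + 1 = k := by omega
  -- divisibility of the binomial coefficient
  have hmul : (ℓ + 1) * ℓ.choose (k - 1) = (ℓ + 1).choose k * k := by
    have h := Nat.add_one_mul_choose_eq ℓ (k - 1)
    simpa [hk1] using h
  have hcop : Nat.Coprime (p ^ m) k := by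
    apply Nat.Coprime.pow_left
    rw [hp.coprime_iff_not_dvd]
    exact Nat.not_dvd_of_pos_of_lt hk0 hkp
  have hdvdk : p ^ m ∣ (ℓ + 1).choose k := by
    have h1 : p ^ m ∣ (ℓ + 1).choose k * k := hmul ▸ Dvd.dvd.mul_right hdvd _
    exact hcop.dvd_of_dvd_mul_right h1
  obtain ⟨d, hd⟩ := hdvdk
  refine ⟨MonoidAlgebra.single (1 : G) (d : ℤ), ?_⟩
  -- the key algebraic identity
  have hins : Finset.Icc (k - 1) ℓ = insert (k - 1) (Finset.Icc k ℓ) := by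
    ext x
    simp only [Finset.mem_Icc, Finset.mem_insert]
    omega
  have hDsum : DK σ ℓ k + DK σ ℓ (k - 1)
      = ∑ i ∈ Finset.Icc (k - 1) ℓ, MonoidAlgebra.single (σ ^ i) ((i + 1).choose k : ℤ) := by
    rw [DK, DK, hins, Finset.sum_insert (by simp; omega), Finset.sum_insert (by simp; omega)]
    rw [add_left_comm, ← Finset.sum_add_distrib]
    congr 1
    · congr 1
      simp [hk1]
    · apply Finset.sum_congr rfl
      intro i _
      rw [← MonoidAlgebra.single_add]
      congr 1
      have : (i + 1).choose k = i.choose k + i.choose (k - 1) := by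
        conv_lhs => rw [← hk1]
        rw [Nat.choose_succ_succ]
        simp only [Nat.succ_eq_add_one, hk1]
        omega
      rw [this]; push_cast; ring
  have hre : ∀ f : ℕ → MonoidAlgebra ℤ G,
      ∑ i ∈ Finset.Icc (k - 1) ℓ, f (i + 1) = ∑ j ∈ Finset.Icc k (ℓ + 1), f j := by
    intro f
    rw [show Finset.Icc k (ℓ + 1) = Finset.Icc (k - 1 + 1) (ℓ + 1) by rw [hk1]]
    rw [← Finset.map_add_right_Icc, Finset.sum_map]
    simp
  have hmulσ : MonoidAlgebra.single σ (1 : ℤ) * (DK σ ℓ k + DK σ ℓ (k - 1))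
      = DK σ ℓ k + MonoidAlgebra.single (1 : G) ((ℓ + 1).choose k : ℤ) := by
    rw [hDsum, Finset.mul_sum]
    have : ∀ i ∈ Finset.Icc (k - 1) ℓ,
        MonoidAlgebra.single σ (1 : ℤ) * MonoidAlgebra.single (σ ^ i) ((i + 1).choose k : ℤ)
        = MonoidAlgebra.single (σ ^ (i + 1)) (((i + 1).choose k : ℤ)) := by
      intro i _
      rw [MonoidAlgebra.single_mul_single, one_mul, pow_succ']
    rw [Finset.sum_congr rfl this,
      hre (fun j => MonoidAlgebra.single (σ ^ j) ((j.choose k : ℤ))),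
      Finset.sum_Icc_succ_top (by omega : k ≤ ℓ + 1), hσ, DK]
  have key : (MonoidAlgebra.single σ (1 : ℤ) - 1) * DK σ ℓ k
      + MonoidAlgebra.single σ (1 : ℤ) * DK σ ℓ (k - 1)
      = MonoidAlgebra.single (1 : G) ((ℓ + 1).choose k : ℤ) := by
    have expand : (MonoidAlgebra.single σ (1 : ℤ) - 1) * DK σ ℓ k
        + MonoidAlgebra.single σ (1 : ℤ) * DK σ ℓ (k - 1)
        = MonoidAlgebra.single σ (1 : ℤ) * (DK σ ℓ k + DK σ ℓ (k - 1)) - DK σ ℓ k := by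
      noncomm_ring
    rw [expand, hmulσ]
    abel
  rw [key, hd]
  rw [MonoidAlgebra.smul_single']
  congr 1
end

section
/- Let R be a commutative ring, let G = G_1 × ⋯ × G_t where each G_i is a cyclic group of order n_i with fixed generator σ_i, let M be a module over the group ring R[G], and let m ∈ M. Then in M ⊗_R R[G] one has the Taylor expansion Σ_{σ ∈ G} (σ·m) ⊗ σ = Σ_κ (D_κ·m) ⊗ (σ_1 − 1)^{k_1} ⋯ (σ_t − 1)^{k_t}, where the sum on the right runs over all multi-indices κ = (k_1, …, k_t) with 0 ≤ k_i ≤ n_i − 1, and D_κ := D_1^{k_1} ⋯ D_t^{k_t} ∈ R[G] with D_i^{k} := Σ_{j=k}^{n_i−1} C(j,k)·σ_i^j. -/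
open TensorProduct

set_option maxHeartbeats 1000000

/-- The Darmon–Kolyvagin derivative in the `i`-th variable,
`D_i^k := Σ_{j=k}^{n_i−1} C(j,k)·σ_i^j ∈ R[G₁ × ⋯ × G_t]`,
where `σ_i` is viewed in the product group via `Pi.mulSingle`. -/
noncomputable def DKpi (R : Type*) [CommRing R] {ι : Type*} [DecidableEq ι]
    {G : ι → Type*} [∀ i, CommGroup (G i)]
    (σ : ∀ i, G i) (n : ι → ℕ) (i : ι) (k : ℕ) : MonoidAlgebra R (∀ j, G j) :=
  ∑ j ∈ Finset.Icc k (n i - 1),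
    MonoidAlgebra.single (Pi.mulSingle i (σ i) ^ j) (j.choose k : R)

/-- product of tmuls is a tmul of products -/
lemma tmul_prod_eq {R A B : Type*} [CommRing R] [CommRing A] [CommRing B]
    [Algebra R A] [Algebra R B] {ι : Type*} (s : Finset ι) (a : ι → A) (b : ι → B) :
    ∏ i ∈ s, (a i ⊗ₜ[R] b i) = (∏ i ∈ s, a i) ⊗ₜ[R] (∏ i ∈ s, b i) := by
  classical
  induction s using Finset.induction with
  | empty => simp [Algebra.TensorProduct.one_def]
  | insert a s h ih =>
    rw [Finset.prod_insert h, Finset.prod_insert h, Finset.prod_insert h, ih,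
      Algebra.TensorProduct.tmul_mul_tmul]

/-- One-variable Taylor expansion in `A ⊗ A`. -/
lemma taylor_one_var {R A : Type*} [CommRing R] [CommRing A] [Algebra R A]
    (x : A) (n : ℕ) :
    ∑ j ∈ Finset.range n, (x ^ j) ⊗ₜ[R] (x ^ j)
      = ∑ k ∈ Finset.range n,
          (∑ j ∈ Finset.Icc k (n - 1), (j.choose k : R) • x ^ j) ⊗ₜ[R] ((x - 1) ^ k) := by
  have hx : ∀ j ∈ Finset.range n,
      (x ^ j) ⊗ₜ[R] (x ^ j)
        = ∑ k ∈ Finset.range n, ((j.choose k : R) • x ^ j) ⊗ₜ[R] ((x - 1) ^ k) := by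
    intro j hj
    rw [Finset.mem_range] at hj
    have hbin : x ^ j = ∑ k ∈ Finset.range (j + 1), (x - 1) ^ k * (j.choose k : A) := by
      conv_lhs => rw [show x = (x - 1) + 1 by ring]
      rw [add_pow]
      simp
    have step : (x ^ j) ⊗ₜ[R] (x ^ j)
        = ∑ k ∈ Finset.range (j + 1), ((j.choose k : R) • x ^ j) ⊗ₜ[R] ((x - 1) ^ k) := by
      nth_rewrite 2 [hbin]
      rw [TensorProduct.tmul_sum]
      refine Finset.sum_congr rfl fun k _ => ?_
      have h2 : (x - 1) ^ k * (j.choose k : A) = (j.choose k : R) • (x - 1) ^ k := by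
        rw [Algebra.smul_def, map_natCast, mul_comm]
      rw [h2, TensorProduct.tmul_smul, TensorProduct.smul_tmul']
    rw [step]
    refine Finset.sum_subset ?_ ?_
    · intro k hk
      rw [Finset.mem_range] at hk ⊢
      omega
    · intro k _ hk
      rw [Finset.mem_range, not_lt] at hk
      have : j.choose k = 0 := Nat.choose_eq_zero_of_lt (by omega)
      simp [this]
  rw [Finset.sum_congr rfl hx, Finset.sum_comm]
  refine Finset.sum_congr rfl fun k hk => ?_
  rw [Finset.mem_range] at hk
  rw [← TensorProduct.sum_tmul]
  congr 1
  refine (Finset.sum_subset ?_ ?_).symm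
  · intro j hj
    rw [Finset.mem_Icc] at hj
    rw [Finset.mem_range]
    omega
  · intro j hj hj'
    rw [Finset.mem_Icc, not_and_or] at hj'
    rw [Finset.mem_range] at hj
    have : j.choose k = 0 := Nat.choose_eq_zero_of_lt (by omega)
    simp [this]

/-- **Taylor's formula.** For `G = G₁ × ⋯ × G_t` with `G_i` cyclic of order
`n_i` generated by `σ_i`, and `M` an `R[G]`-module, one has in `M ⊗_R R[G]`:
`Σ_{σ∈G} (σ·m) ⊗ σ = Σ_κ (D_κ·m) ⊗ (σ₁−1)^{k₁} ⋯ (σ_t−1)^{k_t}`,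
the right-hand sum running over multi-indices `κ` with `0 ≤ k_i ≤ n_i − 1`. -/
theorem stmt7 (R : Type*) [CommRing R] {ι : Type*} [Fintype ι] [DecidableEq ι]
    (G : ι → Type*) [∀ i, CommGroup (G i)] [∀ i, Fintype (G i)]
    (n : ι → ℕ) (σ : ∀ i, G i)
    (hcard : ∀ i, Fintype.card (G i) = n i)
    (hgen : ∀ i, ∀ g : G i, g ∈ Subgroup.zpowers (σ i))
    (M : Type*) [AddCommGroup M] [Module R M]
    [Module (MonoidAlgebra R (∀ i, G i)) M]
    [IsScalarTower R (MonoidAlgebra R (∀ i, G i)) M]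
    (m : M) :
    ∑ g : ∀ i, G i,
        (MonoidAlgebra.single g (1 : R) • m) ⊗ₜ[R] MonoidAlgebra.single g (1 : R)
      = ∑ κ : ∀ i, Fin (n i),
          ((∏ i, DKpi R σ n i (κ i : ℕ)) • m) ⊗ₜ[R]
            ∏ i, (MonoidAlgebra.single (Pi.mulSingle i (σ i)) (1 : R) - 1) ^ (κ i : ℕ) := by
  classical
  set A := MonoidAlgebra R (∀ i, G i) with hA
  -- the linear map Φ : A ⊗ A → M ⊗ A
  let f : A →ₗ[R] M :=
    { toFun := fun a => a • m
      map_add' := fun a b => add_smul a b m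
      map_smul' := fun r a => smul_assoc r a m }
  let Φ : A ⊗[R] A →ₗ[R] M ⊗[R] A := TensorProduct.map f LinearMap.id
  -- orders
  have horder : ∀ i, orderOf (σ i) = n i := by
    intro i
    rw [orderOf_eq_card_of_forall_mem_zpowers (hgen i), Nat.card_eq_fintype_card, hcard i]
  -- the generators x i of A
  set x : ι → A := fun i => MonoidAlgebra.single (Pi.mulSingle i (σ i)) (1 : R) with hxdef
  have hxof : ∀ i, x i = MonoidAlgebra.of R (∀ j, G j) (Pi.mulSingle i (σ i)) := fun i => rfl
  -- bijection between multi-indices and group elements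
  let F : (∀ i, Fin (n i)) → (∀ i, G i) := fun κ i => σ i ^ (κ i : ℕ)
  have hFbij : Function.Bijective F := by
    rw [Fintype.bijective_iff_injective_and_card]
    constructor
    · intro κ κ' h
      funext i
      have hi : σ i ^ (κ i : ℕ) = σ i ^ (κ' i : ℕ) := congrFun h i
      have := pow_injOn_Iio_orderOf (x := σ i)
        (by simp [horder i, (κ i).isLt] : ((κ i : ℕ)) ∈ Set.Iio (orderOf (σ i)))
        (by simp [horder i, (κ' i).isLt] : ((κ' i : ℕ)) ∈ Set.Iio (orderOf (σ i))) hi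
      exact Fin.ext this
    · simp [Fintype.card_pi, hcard]
  -- key identity in A ⊗ A
  have key : ∑ g : ∀ i, G i, (MonoidAlgebra.single g (1 : R)) ⊗ₜ[R]
        (MonoidAlgebra.single g (1 : R))
      = ∑ κ : ∀ i, Fin (n i),
          (∏ i, DKpi R σ n i (κ i : ℕ)) ⊗ₜ[R] ∏ i, (x i - 1) ^ (κ i : ℕ) := by
    -- reindex LHS by multi-indices
    rw [← Function.Bijective.sum_comp hFbij
      (fun g => (MonoidAlgebra.single g (1 : R)) ⊗ₜ[R] (MonoidAlgebra.single g (1 : R)))]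
    have hof : ∀ κ : ∀ i, Fin (n i),
        MonoidAlgebra.single (F κ) (1 : R) = ∏ i, (x i) ^ (κ i : ℕ) := by
      intro κ
      have h1 : F κ = ∏ i, Pi.mulSingle i (σ i) ^ (κ i : ℕ) := by
        have : F κ = ∏ i, Pi.mulSingle i (F κ i) := (Finset.univ_prod_mulSingle (F κ)).symm
        rw [this]
        refine Finset.prod_congr rfl fun i _ => ?_
        show Pi.mulSingle i (σ i ^ (κ i : ℕ)) = _
        rw [Pi.mulSingle_pow]
      rw [h1, ← MonoidAlgebra.of_apply, map_prod]
      refine Finset.prod_congr rfl fun i _ => ?_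
      rw [map_pow, MonoidAlgebra.of_apply, hxdef]
    calc ∑ κ : ∀ i, Fin (n i),
          (MonoidAlgebra.single (F κ) (1 : R)) ⊗ₜ[R] (MonoidAlgebra.single (F κ) (1 : R))
        = ∑ κ : ∀ i, Fin (n i), ∏ i, (((x i) ^ (κ i : ℕ)) ⊗ₜ[R] ((x i) ^ (κ i : ℕ))) := by
          refine Finset.sum_congr rfl fun κ _ => ?_
          rw [hof κ, tmul_prod_eq]
      _ = ∏ i, ∑ k : Fin (n i), (((x i) ^ (k : ℕ)) ⊗ₜ[R] ((x i) ^ (k : ℕ))) :=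
          (Fintype.prod_sum
            (fun i (k : Fin (n i)) => ((x i) ^ (k : ℕ)) ⊗ₜ[R] ((x i) ^ (k : ℕ)))).symm
      _ = ∏ i, ∑ k : Fin (n i), (DKpi R σ n i (k : ℕ)) ⊗ₜ[R] ((x i - 1) ^ (k : ℕ)) := by
          refine Finset.prod_congr rfl fun i _ => ?_
          rw [Fin.sum_univ_eq_sum_range (fun k => ((x i) ^ k) ⊗ₜ[R] ((x i) ^ k)),
            Fin.sum_univ_eq_sum_range (fun k => (DKpi R σ n i k) ⊗ₜ[R] ((x i - 1) ^ k))]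
          rw [taylor_one_var (x i) (n i)]
          refine Finset.sum_congr rfl fun k _ => ?_
          congr 1
          unfold DKpi
          refine Finset.sum_congr rfl fun j _ => ?_
          rw [hxdef]
          rw [MonoidAlgebra.single_pow, one_pow, MonoidAlgebra.smul_single', mul_one]
      _ = ∑ κ : ∀ i, Fin (n i),
            ∏ i, ((DKpi R σ n i (κ i : ℕ)) ⊗ₜ[R] ((x i - 1) ^ (κ i : ℕ))) :=
          Fintype.prod_sum
            (fun i (k : Fin (n i)) => (DKpi R σ n i (k : ℕ)) ⊗ₜ[R] ((x i - 1) ^ (k : ℕ)))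
      _ = ∑ κ : ∀ i, Fin (n i),
            (∏ i, DKpi R σ n i (κ i : ℕ)) ⊗ₜ[R] ∏ i, (x i - 1) ^ (κ i : ℕ) := by
          refine Finset.sum_congr rfl fun κ _ => ?_
          rw [tmul_prod_eq]
  -- apply Φ to both sides of `key`
  have := congrArg Φ key
  rw [map_sum, map_sum] at this
  simpa only [Φ, TensorProduct.map_tmul, LinearMap.id_coe, id_eq, f, LinearMap.coe_mk,
    AddHom.coe_mk] using this
end

section
/- Let G be a group, let R be a commutative ring, and let M be an R-module equipped with an action of G by R-linear automorphisms such that the only G-stable R-submodules of M are 0 and M. Let N be a normal subgroup of G such that the quotient group G/N is solvable, and suppose that the image of G in the group of R-linear automorphisms of M is not a solvable group. Then the submodule of N-invariants M^N := {x ∈ M : n·x = x for all n ∈ N} is zero. -/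
/-- Let `G` act on an `R`-module `M` by `R`-linear automorphisms, such
that the only `G`-stable submodules are `0` and `M`. If `N ⊴ G` with `G/N` solvable and
the image of `G` in the `R`-linear automorphisms of `M` is not solvable, then `M^N = 0`. -/
theorem stmt10 {G : Type*} [Group G] {R : Type*} [CommRing R]
    {M : Type*} [AddCommGroup M] [Module R M]
    (ρ : G →* (M ≃ₗ[R] M))
    (hirr : ∀ W : Submodule R M, (∀ g : G, ∀ x ∈ W, ρ g x ∈ W) → W = ⊥ ∨ W = ⊤)
    (N : Subgroup G) [hN : N.Normal]
    (hsolv : IsSolvable (G ⧸ N))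
    (himg : ¬ IsSolvable ρ.range) :
    ∀ x : M, (∀ n ∈ N, ρ n x = x) → x = 0 := by
  set W : Submodule R M :=
    { carrier := { x | ∀ n ∈ N, ρ n x = x }
      zero_mem' := by intro n _; simp
      add_mem' := by intro a b ha hb n hn; simp [map_add, ha n hn, hb n hn]
      smul_mem' := by intro c a ha n hn; simp [map_smul, ha n hn] } with hW
  have hstable : ∀ g : G, ∀ x ∈ W, ρ g x ∈ W := by
    intro g x hx n hn
    have h1 : (ρ n) ((ρ g) x) = (ρ g) ((ρ (g⁻¹ * n * g)) x) := by
      have h2 : n * g = g * (g⁻¹ * n * g) := by group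
      have h3 := congrArg (fun e : M ≃ₗ[R] M => e x) (congrArg ρ h2)
      simpa [map_mul] using h3
    rw [h1, hx _ (hN.conj_mem' n hn g)]
  rcases hirr W hstable with h | h
  · intro x hx
    have : x ∈ W := hx
    rw [h] at this
    simpa using this
  · exfalso
    apply himg
    have hker : N ≤ ρ.ker := by
      intro n hn
      ext x
      have : x ∈ W := h ▸ Submodule.mem_top
      simpa using this n hn
    let φ : G ⧸ N →* (M ≃ₗ[R] M) := QuotientGroup.lift N ρ hker
    have hrange : φ.range = ρ.range := by
      ext y
      constructor
      · rintro ⟨q, rfl⟩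
        obtain ⟨g, rfl⟩ := QuotientGroup.mk'_surjective N q
        exact ⟨g, rfl⟩
      · rintro ⟨g, rfl⟩
        exact ⟨QuotientGroup.mk g, rfl⟩
    rw [← hrange]
    haveI : Group.IsSolvable (G ⧸ N) := hsolv
    exact solvable_of_surjective φ.rangeRestrict_surjective
end
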